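/- (Proposition 4, robustness/continuity.) For an n×m nonnegative matrix M and probability vectors r ∈ ℝ^n, c ∈ ℝ^m with strictly positive entries, let Φ(M,r,c) denote the minimizer of D_KL(P‖M) over P ∈ U(r,c) when it exists and is unique. Then Φ is continuous at every point where it is defined: if (M_k, r_k, c_k) → (M, r, c) with each Φ(M_k, r_k, c_k) and Φ(M,r,c) defined, then Φ(M_k, r_k, c_k) → Φ(M, r, c). In particular, Φ restricted to strictly positive M and strictly positive probability vectors r, c is a continuous map. -/

import Mathlib

/-- `U(r,c)`: nonnegative matrices with row sums `r` and column sums `c`. -/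
def transportPolytope {n m : ℕ} (r : Fin n → ℝ) (c : Fin m → ℝ) :
    Set (Matrix (Fin n) (Fin m) ℝ) :=
  {P | (∀ i j, 0 ≤ P i j) ∧ (∀ i, ∑ j, P i j = r i) ∧ (∀ j, ∑ i, P i j = c j)}

open Classical in
/-- Relative entropy `D_KL(P‖M) = Σ_{ij} P_ij log(P_ij/M_ij)`, with conventions
`0 log 0 = 0` and `D_KL(P‖M) = +∞` if some `P_ij > 0` while `M_ij = 0`. -/
noncomputable def klDiv {n m : ℕ} (P M : Matrix (Fin n) (Fin m) ℝ) : EReal :=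
  if ∀ i j, M i j = 0 → P i j = 0 then
    ((∑ i, ∑ j, P i j * Real.log (P i j / M i j) : ℝ) : EReal)
  else ⊤

/-- `P` is the value `Φ(M,r,c)`: the unique minimizer of `D_KL(·‖M)` over `U(r,c)`. -/
def IsPhi {n m : ℕ} (M : Matrix (Fin n) (Fin m) ℝ) (r : Fin n → ℝ) (c : Fin m → ℝ)
    (P : Matrix (Fin n) (Fin m) ℝ) : Prop :=
  P ∈ transportPolytope r c ∧
  (∀ Q ∈ transportPolytope r c, klDiv P M ≤ klDiv Q M) ∧
  (∀ P' : Matrix (Fin n) (Fin m) ℝ,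
    (P' ∈ transportPolytope r c ∧ ∀ Q ∈ transportPolytope r c, klDiv P' M ≤ klDiv Q M) →
    P' = P)

open Filter Finset

section PhiAux

variable {n m : ℕ}

lemma klDiv_eq_coe {P M : Matrix (Fin n) (Fin m) ℝ}
    (h : ∀ i j, M i j = 0 → P i j = 0) :
    klDiv P M = ((∑ i, ∑ j, P i j * Real.log (P i j / M i j) : ℝ) : EReal) := by
  rw [klDiv, if_pos h]

lemma klDiv_cond_of_ne_top {P M : Matrix (Fin n) (Fin m) ℝ} (h : klDiv P M ≠ ⊤) :
    ∀ i j, M i j = 0 → P i j = 0 := by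
  by_contra hc
  rw [klDiv, if_neg hc] at h
  exact h rfl

lemma xlogdiv (x y : ℝ) (hy : y ≠ 0) :
    x * Real.log (x / y) = x * Real.log x - x * Real.log y := by
  rcases eq_or_ne x 0 with rfl | hx
  · simp
  · rw [Real.log_div hx hy, mul_sub]

/-- With at least two rows and two columns and positive marginals, the transport
polytope contains two distinct points. -/
lemma two_points (hn : 2 ≤ n) (hm : 2 ≤ m) {r : Fin n → ℝ} {c : Fin m → ℝ}
    (hr0 : ∀ i, 0 < r i) (hc0 : ∀ j, 0 < c j)
    (hr1 : ∑ i, r i = 1) (hc1 : ∑ j, c j = 1) :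
    ∃ A B : Matrix (Fin n) (Fin m) ℝ,
      A ∈ transportPolytope r c ∧ B ∈ transportPolytope r c ∧ A ≠ B := by
  classical
  set a0 : Fin n := ⟨0, by omega⟩
  set a1 : Fin n := ⟨1, by omega⟩
  set b0 : Fin m := ⟨0, by omega⟩
  set b1 : Fin m := ⟨1, by omega⟩
  set u : Fin n → ℝ := fun i => (if i = a0 then (1:ℝ) else 0) - (if i = a1 then (1:ℝ) else 0)
    with hu
  set v : Fin m → ℝ := fun j => (if j = b0 then (1:ℝ) else 0) - (if j = b1 then (1:ℝ) else 0)
    with hv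
  have ha01 : a0 ≠ a1 := by simp [a0, a1, Fin.ext_iff]
  have hb01 : b0 ≠ b1 := by simp [b0, b1, Fin.ext_iff]
  have husum : ∑ i, u i = 0 := by
    simp [hu, Finset.sum_sub_distrib]
  have hvsum : ∑ j, v j = 0 := by
    simp [hv, Finset.sum_sub_distrib]
  have hua0 : u a0 = 1 := by simp [hu, if_neg ha01]
  have hvb0 : v b0 = 1 := by simp [hv, if_neg hb01]
  have huabs : ∀ i, |u i| ≤ 1 := by
    intro i
    simp only [hu]
    split_ifs <;> norm_num
  have hvabs : ∀ j, |v j| ≤ 1 := by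
    intro j
    simp only [hv]
    split_ifs <;> norm_num
  obtain ⟨p0, -⟩ : ∃ p : Fin n × Fin m, p ∈ (Finset.univ : Finset (Fin n × Fin m)) :=
    ⟨(a0, b0), Finset.mem_univ _⟩
  set ε : ℝ := ((Finset.univ : Finset (Fin n × Fin m)).inf' ⟨p0, Finset.mem_univ _⟩
      fun p => r p.1 * c p.2) / 2 with hε
  have hεle : ∀ i j, ε ≤ r i * c j / 2 := by
    intro i j
    have := Finset.inf'_le (fun p : Fin n × Fin m => r p.1 * c p.2) (Finset.mem_univ (i, j))
    rw [hε]
    linarith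
  have hεpos : 0 < ε := by
    rw [hε]
    obtain ⟨p, -, hp⟩ := Finset.exists_mem_eq_inf' ⟨p0, Finset.mem_univ _⟩
      (fun p : Fin n × Fin m => r p.1 * c p.2)
    rw [hp]
    have := mul_pos (hr0 p.1) (hc0 p.2)
    linarith
  refine ⟨fun i j => r i * c j, fun i j => r i * c j + ε * (u i * v j), ⟨?_, ?_, ?_⟩,
    ⟨?_, ?_, ?_⟩, ?_⟩
  · exact fun i j => (mul_pos (hr0 i) (hc0 j)).le
  · intro i; rw [← Finset.mul_sum, hc1, mul_one]
  · intro j; rw [← Finset.sum_mul, hr1, one_mul]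
  · intro i j
    show 0 ≤ r i * c j + ε * (u i * v j)
    have h1 : |ε * (u i * v j)| ≤ ε := by
      rw [abs_mul, abs_of_pos hεpos, abs_mul]
      calc ε * (|u i| * |v j|) ≤ ε * 1 := by
            apply mul_le_mul_of_nonneg_left _ hεpos.le
            exact mul_le_one₀ (huabs i) (abs_nonneg _) (hvabs j)
        _ = ε := mul_one ε
    have h2 : -ε ≤ ε * (u i * v j) := neg_le_of_abs_le h1
    have := hεle i j
    have := mul_pos (hr0 i) (hc0 j)
    linarith
  · intro i
    rw [Finset.sum_add_distrib, ← Finset.mul_sum, hc1, mul_one]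
    have : ∑ j, ε * (u i * v j) = ε * u i * ∑ j, v j := by
      rw [Finset.mul_sum]; apply Finset.sum_congr rfl; intros; ring
    rw [this, hvsum, mul_zero, add_zero]
  · intro j
    rw [Finset.sum_add_distrib, ← Finset.sum_mul, hr1, one_mul]
    have : ∑ i, ε * (u i * v j) = ε * v j * ∑ i, u i := by
      rw [Finset.mul_sum]; apply Finset.sum_congr rfl; intros; ring
    rw [this, husum, mul_zero, add_zero]
  · intro hAB
    have h : r a0 * c b0 = r a0 * c b0 + ε * (u a0 * v b0) := congrFun (congrFun hAB a0) b0
    rw [hua0, hvb0, mul_one, mul_one] at h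
    linarith

lemma isPhi_supp (hn : 2 ≤ n) (hm : 2 ≤ m)
    {M P : Matrix (Fin n) (Fin m) ℝ} {r : Fin n → ℝ} {c : Fin m → ℝ}
    (hr0 : ∀ i, 0 < r i) (hc0 : ∀ j, 0 < c j)
    (hr1 : ∑ i, r i = 1) (hc1 : ∑ j, c j = 1)
    (h : IsPhi M r c P) :
    ∀ i j, M i j = 0 → P i j = 0 := by
  refine klDiv_cond_of_ne_top fun htop => ?_
  obtain ⟨A, B, hA, hB, hAB⟩ := two_points hn hm hr0 hc0 hr1 hc1
  have key : ∀ X ∈ transportPolytope r c, X = P := by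
    intro X hX
    refine h.2.2 X ⟨hX, fun Y hY => ?_⟩
    have h1 := h.2.1 Y hY
    rw [htop, top_le_iff] at h1
    rw [h1]
    exact le_top
  exact hAB ((key A hA).trans (key B hB).symm)

lemma sum_tendsto_atBot {ι : Type*} {s : Finset ι} (hs : s.Nonempty) {f : ι → ℕ → ℝ}
    (hf : ∀ p ∈ s, Tendsto (f p) atTop atBot) :
    Tendsto (fun k => ∑ p ∈ s, f p k) atTop atBot := by
  induction hs using Finset.Nonempty.cons_induction with
  | singleton a => simpa using hf a (by simp)
  | cons a t hat ht ih =>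
      simp only [Finset.sum_cons]
      exact Tendsto.atBot_add_atBot (hf a (by simp)) (ih fun p hp => hf p (by simp [hp]))

lemma main_key (hn : 2 ≤ n) (hm : 2 ≤ m)
    (Mk : ℕ → Matrix (Fin n) (Fin m) ℝ) (rk : ℕ → Fin n → ℝ) (ck : ℕ → Fin m → ℝ)
    (M : Matrix (Fin n) (Fin m) ℝ) (r : Fin n → ℝ) (c : Fin m → ℝ)
    (Pk : ℕ → Matrix (Fin n) (Fin m) ℝ) (P Q : Matrix (Fin n) (Fin m) ℝ)
    (hMk : ∀ k, ∀ i j, 0 ≤ Mk k i j)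
    (hrk : ∀ k, (∀ i, 0 < rk k i) ∧ ∑ i, rk k i = 1)
    (hck : ∀ k, (∀ j, 0 < ck k j) ∧ ∑ j, ck k j = 1)
    (hMconv : Tendsto Mk atTop (nhds M))
    (hPconv : Tendsto Pk atTop (nhds Q))
    (hPhik : ∀ k, IsPhi (Mk k) (rk k) (ck k) (Pk k))
    (hrconv : Tendsto rk atTop (nhds r))
    (hcconv : Tendsto ck atTop (nhds c))
    (hPhi : IsPhi M r c P) : Q = P := by
  classical
  have hPkQ : ∀ i j, Tendsto (fun k => Pk k i j) atTop (nhds (Q i j)) :=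
    fun i j => (tendsto_pi_nhds.mp ((tendsto_pi_nhds.mp hPconv) i)) j
  have hMkM : ∀ i j, Tendsto (fun k => Mk k i j) atTop (nhds (M i j)) :=
    fun i j => (tendsto_pi_nhds.mp ((tendsto_pi_nhds.mp hMconv) i)) j
  have hQmem : Q ∈ transportPolytope r c := by
    refine ⟨fun i j => ge_of_tendsto' (hPkQ i j) fun k => (hPhik k).1.1 i j,
      fun i => ?_, fun j => ?_⟩
    · refine tendsto_nhds_unique (tendsto_finset_sum _ fun j _ => hPkQ i j) ?_
      exact ((tendsto_pi_nhds.mp hrconv) i).congr fun k => ((hPhik k).1.2.1 i).symm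
    · refine tendsto_nhds_unique (tendsto_finset_sum _ fun i _ => hPkQ i j) ?_
      exact ((tendsto_pi_nhds.mp hcconv) j).congr fun k => ((hPhik k).1.2.2 j).symm
  have hQ0 : ∀ i j, 0 ≤ Q i j := hQmem.1
  by_cases htop : klDiv P M = ⊤
  · have key : ∀ X ∈ transportPolytope r c, X = P := by
      intro X hX
      refine hPhi.2.2 X ⟨hX, fun Y hY => ?_⟩
      have h1 := hPhi.2.1 Y hY
      rw [htop, top_le_iff] at h1
      rw [h1]; exact le_top
    exact key Q hQmem
  have hfinP : ∀ i j, M i j = 0 → P i j = 0 := klDiv_cond_of_ne_top htop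
  have hfinPk : ∀ k, ∀ i j, Mk k i j = 0 → Pk k i j = 0 := fun k =>
    isPhi_supp hn hm (hrk k).1 (hck k).1 (hrk k).2 (hck k).2 (hPhik k)
  -- the mixing coefficient `s k`
  set bad : Finset (Fin n × Fin m) :=
    Finset.univ.filter (fun p => P p.1 p.2 = 0 ∧ 0 < Q p.1 p.2) with hbaddef
  set qm : ℝ := if hb : bad.Nonempty
    then (bad.image fun p => Q p.1 p.2).min' (hb.image _) else 1 with hqmdef
  have hqm0 : 0 < qm := by
    rw [hqmdef]
    split_ifs with hb
    · obtain ⟨p, hp, hpq⟩ := Finset.mem_image.mp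
        (Finset.min'_mem (bad.image fun p => Q p.1 p.2) (hb.image _))
      rw [← hpq]
      exact (Finset.mem_filter.mp hp).2.2
    · exact one_pos
  have hqmle : ∀ p ∈ bad, qm ≤ Q p.1 p.2 := by
    intro p hp
    rw [hqmdef, dif_pos ⟨p, hp⟩]
    exact Finset.min'_le _ _ (Finset.mem_image_of_mem _ hp)
  set d : ℕ → ℝ := fun k => ∑ p : Fin n × Fin m, |Pk k p.1 p.2 - Q p.1 p.2| with hddef
  have hd0 : ∀ k, 0 ≤ d k := by
    intro k
    simp only [hddef]
    exact Finset.sum_nonneg fun p _ => abs_nonneg _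
  have hdle : ∀ (k : ℕ) (p : Fin n × Fin m), |Pk k p.1 p.2 - Q p.1 p.2| ≤ d k := by
    intro k p
    simp only [hddef]
    exact Finset.single_le_sum (f := fun q : Fin n × Fin m => |Pk k q.1 q.2 - Q q.1 q.2|)
      (fun q _ => abs_nonneg _) (Finset.mem_univ p)
  have hdconv : Tendsto d atTop (nhds 0) := by
    have h := tendsto_finset_sum (Finset.univ : Finset (Fin n × Fin m))
      (fun p _ => ((hPkQ p.1 p.2).sub_const (Q p.1 p.2)).abs)
    simpa [hddef] using h
  set s : ℕ → ℝ := fun k => min 1 (d k / qm) with hsdef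
  have hs0 : ∀ k, 0 ≤ s k := fun k => le_min zero_le_one (div_nonneg (hd0 k) hqm0.le)
  have hs1 : ∀ k, s k ≤ 1 := fun k => min_le_left _ _
  have hsconv : Tendsto s atTop (nhds 0) := by
    have h1 : Tendsto (fun k => d k / qm) atTop (nhds 0) := by
      simpa using hdconv.div_const qm
    have h2 := (tendsto_const_nhds : Tendsto (fun _ : ℕ => (1:ℝ)) atTop (nhds 1)).min h1
    simpa [hsdef] using h2
  set Rh : ℕ → Matrix (Fin n) (Fin m) ℝ :=
    fun k i j => Pk k i j + (1 - s k) * (P i j - Q i j) with hRhdef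
  have hbadkey : ∀ k, ∀ i j, P i j = 0 → 0 < Q i j → 0 ≤ Rh k i j := by
    intro k i j hP0 hQp
    have hkey : Q i j - Pk k i j ≤ s k * Q i j := by
      rcases le_or_gt (d k / qm) 1 with h | h
      · have hsk : s k = d k / qm := min_eq_right h
        have h1 : Q i j - Pk k i j ≤ d k := by
          have h2 := hdle k (i, j)
          have h3 := neg_abs_le (Pk k i j - Q i j)
          simp only at h2
          linarith
        have hmemb : (i, j) ∈ bad := Finset.mem_filter.mpr ⟨Finset.mem_univ _, hP0, hQp⟩
        have h3 : qm ≤ Q i j := hqmle (i, j) hmemb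
        rw [hsk, div_mul_eq_mul_div, le_div_iff₀ hqm0]
        nlinarith [hd0 k]
      · have hsk : s k = 1 := min_eq_left h.le
        have := (hPhik k).1.1 i j
        rw [hsk, one_mul]
        linarith
    show 0 ≤ Pk k i j + (1 - s k) * (P i j - Q i j)
    rw [hP0]
    nlinarith [hs0 k, hs1 k]
  have hRhconv : ∀ i j, Tendsto (fun k => Rh k i j) atTop (nhds (P i j)) := by
    intro i j
    have h := (hPkQ i j).add
      (((tendsto_const_nhds : Tendsto (fun _ : ℕ => (1:ℝ)) atTop (nhds 1)).sub
        hsconv).mul_const (P i j - Q i j))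
    have he : Q i j + (1 - 0) * (P i j - Q i j) = P i j := by ring
    rw [he] at h
    exact h
  have hE1 : ∀ᶠ k in atTop, ∀ p : Fin n × Fin m, 0 < P p.1 p.2 → 0 ≤ Rh k p.1 p.2 := by
    rw [Filter.eventually_all]
    intro p
    by_cases hp : 0 < P p.1 p.2
    · filter_upwards [(hRhconv p.1 p.2).eventually (eventually_ge_nhds hp)] with k hk _
      exact hk
    · exact Filter.Eventually.of_forall fun k h => absurd h hp
  have hE2 : ∀ᶠ k in atTop, ∀ p : Fin n × Fin m, M p.1 p.2 ≠ 0 → Mk k p.1 p.2 ≠ 0 := by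
    rw [Filter.eventually_all]
    intro p
    by_cases hp : M p.1 p.2 ≠ 0
    · filter_upwards [(hMkM p.1 p.2).eventually_ne hp] with k hk _
      exact hk
    · exact Filter.Eventually.of_forall fun k h => absurd h hp
  have hAk : ∀ᶠ k in atTop, Rh k ∈ transportPolytope (rk k) (ck k) ∧
      (∀ i j, Mk k i j = 0 → Rh k i j = 0) := by
    filter_upwards [hE1, hE2] with k h1 h2
    have hnonneg : ∀ i j, 0 ≤ Rh k i j := by
      intro i j
      rcases (hPhi.1.1 i j).lt_or_eq with hPpos | hP0
      · exact h1 (i, j) hPpos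
      · rcases (hQ0 i j).lt_or_eq with hQpos | hQ0'
        · exact hbadkey k i j hP0.symm hQpos
        · show 0 ≤ Pk k i j + (1 - s k) * (P i j - Q i j)
          rw [← hP0, ← hQ0', sub_self, mul_zero, add_zero]
          exact (hPhik k).1.1 i j
    refine ⟨⟨hnonneg, fun i => ?_, fun j => ?_⟩, fun i j hM0 => ?_⟩
    · show ∑ j, (Pk k i j + (1 - s k) * (P i j - Q i j)) = rk k i
      rw [Finset.sum_add_distrib, ← Finset.mul_sum, Finset.sum_sub_distrib,
        hPhi.1.2.1 i, hQmem.2.1 i, sub_self, mul_zero, add_zero, (hPhik k).1.2.1 i]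
    · show ∑ i, (Pk k i j + (1 - s k) * (P i j - Q i j)) = ck k j
      rw [Finset.sum_add_distrib, ← Finset.mul_sum, Finset.sum_sub_distrib,
        hPhi.1.2.2 j, hQmem.2.2 j, sub_self, mul_zero, add_zero, (hPhik k).1.2.2 j]
    · by_contra hne
      have hpos : 0 < Rh k i j := (hnonneg i j).lt_of_ne (Ne.symm hne)
      have hPk0 : Pk k i j = 0 := hfinPk k i j hM0
      have hP0 : P i j = 0 := by
        by_contra hP0'
        exact h2 (i, j) (fun hM' => hP0' (hfinP i j hM')) hM0
      have hle : Rh k i j ≤ 0 := by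
        show Pk k i j + (1 - s k) * (P i j - Q i j) ≤ 0
        rw [hPk0, hP0]
        nlinarith [hQ0 i j, hs1 k]
      linarith
  set gl : ℕ → (Fin n × Fin m) → ℝ := fun k p =>
    Rh k p.1 p.2 * Real.log (Rh k p.1 p.2 / Mk k p.1 p.2) -
      Pk k p.1 p.2 * Real.log (Pk k p.1 p.2 / Mk k p.1 p.2) with hgldef
  set A : ℕ → ℝ := fun k => ∑ p : Fin n × Fin m, gl k p with hAdef
  have hAge : ∀ᶠ k in atTop, 0 ≤ A k := by
    filter_upwards [hAk] with k hk
    have hle := (hPhik k).2.1 (Rh k) hk.1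
    rw [klDiv_eq_coe (hfinPk k), klDiv_eq_coe hk.2, EReal.coe_le_coe_iff] at hle
    have h1 : A k = (∑ i, ∑ j, Rh k i j * Real.log (Rh k i j / Mk k i j)) -
        (∑ i, ∑ j, Pk k i j * Real.log (Pk k i j / Mk k i j)) := by
      simp only [hAdef, hgldef]
      rw [Finset.sum_sub_distrib, Fintype.sum_prod_type, Fintype.sum_prod_type]
    rw [h1]
    linarith
  set T1 : Finset (Fin n × Fin m) := Finset.univ.filter (fun p => M p.1 p.2 ≠ 0) with hT1def
  set T3 : Finset (Fin n × Fin m) :=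
    Finset.univ.filter (fun p => M p.1 p.2 = 0 ∧ Q p.1 p.2 ≠ 0) with hT3def
  have hdisjT : Disjoint T1 T3 := by
    rw [Finset.disjoint_left]
    intro p h1 h3
    exact (Finset.mem_filter.mp h1).2 (Finset.mem_filter.mp h3).2.1
  have hsplit : ∀ k, A k = (∑ p ∈ T1, gl k p) + (∑ p ∈ T3, gl k p) := by
    intro k
    rw [hAdef, ← Finset.sum_union hdisjT]
    refine (Finset.sum_subset (Finset.subset_univ _) ?_).symm
    intro p _ hp
    have hM0 : M p.1 p.2 = 0 := by
      by_contra h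
      exact hp (Finset.mem_union_left _ (Finset.mem_filter.mpr ⟨Finset.mem_univ _, h⟩))
    have hQp0 : Q p.1 p.2 = 0 := by
      by_contra h
      exact hp (Finset.mem_union_right _ (Finset.mem_filter.mpr ⟨Finset.mem_univ _, hM0, h⟩))
    have hPp0 : P p.1 p.2 = 0 := hfinP _ _ hM0
    have hRP : Rh k p.1 p.2 = Pk k p.1 p.2 := by
      show Pk k p.1 p.2 + (1 - s k) * (P p.1 p.2 - Q p.1 p.2) = Pk k p.1 p.2
      rw [hPp0, hQp0, sub_self, mul_zero, add_zero]
    simp only [hgldef]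
    rw [hRP, sub_self]
  set G : (Fin n × Fin m) → ℝ := fun p =>
    (P p.1 p.2 * Real.log (P p.1 p.2) - P p.1 p.2 * Real.log (M p.1 p.2)) -
      (Q p.1 p.2 * Real.log (Q p.1 p.2) - Q p.1 p.2 * Real.log (M p.1 p.2)) with hGdef
  have hT1lim : Tendsto (fun k => ∑ p ∈ T1, gl k p) atTop (nhds (∑ p ∈ T1, G p)) := by
    refine tendsto_finset_sum _ fun p hp => ?_
    have hMne : M p.1 p.2 ≠ 0 := (Finset.mem_filter.mp hp).2
    have hMkne : ∀ᶠ k in atTop, Mk k p.1 p.2 ≠ 0 := (hMkM p.1 p.2).eventually_ne hMne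
    have hlog : Tendsto (fun k => Real.log (Mk k p.1 p.2)) atTop
        (nhds (Real.log (M p.1 p.2))) :=
      (Real.continuousAt_log hMne).tendsto.comp (hMkM p.1 p.2)
    have hRmul : Tendsto (fun k => Rh k p.1 p.2 * Real.log (Rh k p.1 p.2)) atTop
        (nhds (P p.1 p.2 * Real.log (P p.1 p.2))) :=
      (Real.continuous_mul_log.tendsto _).comp (hRhconv p.1 p.2)
    have hPmul : Tendsto (fun k => Pk k p.1 p.2 * Real.log (Pk k p.1 p.2)) atTop
        (nhds (Q p.1 p.2 * Real.log (Q p.1 p.2))) :=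
      (Real.continuous_mul_log.tendsto _).comp (hPkQ p.1 p.2)
    have hmain := (hRmul.sub ((hRhconv p.1 p.2).mul hlog)).sub
      (hPmul.sub ((hPkQ p.1 p.2).mul hlog))
    refine Tendsto.congr' ?_ hmain
    filter_upwards [hMkne] with k hk
    simp only [hgldef]
    rw [xlogdiv _ _ hk, xlogdiv _ _ hk]
  by_cases hT3 : T3.Nonempty
  · exfalso
    have hT3lim : Tendsto (fun k => ∑ p ∈ T3, gl k p) atTop atBot := by
      refine sum_tendsto_atBot hT3 fun p hp => ?_
      obtain ⟨hM0, hQne⟩ := (Finset.mem_filter.mp hp).2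
      have hQp : 0 < Q p.1 p.2 := (hQ0 p.1 p.2).lt_of_ne (Ne.symm hQne)
      have hP0 : P p.1 p.2 = 0 := hfinP _ _ hM0
      have hPkpos : ∀ᶠ k in atTop, Q p.1 p.2 / 2 < Pk k p.1 p.2 :=
        (hPkQ p.1 p.2).eventually (eventually_gt_nhds (by linarith))
      have hMkne : ∀ᶠ k in atTop, Mk k p.1 p.2 ≠ 0 := by
        filter_upwards [hPkpos] with k hk hMk0
        have := hfinPk k p.1 p.2 hMk0
        linarith
      have hlogbot : Tendsto (fun k => Real.log (Mk k p.1 p.2)) atTop atBot := by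
        have hMk0 : Tendsto (fun k => Mk k p.1 p.2) atTop (nhds 0) := by
          have h := hMkM p.1 p.2; rwa [hM0] at h
        refine Real.tendsto_log_nhdsNE_zero.comp ?_
        rw [tendsto_nhdsWithin_iff]
        exact ⟨hMk0, hMkne⟩
      have hbr : Tendsto (fun k => Rh k p.1 p.2 * Real.log (Rh k p.1 p.2) -
          Pk k p.1 p.2 * Real.log (Pk k p.1 p.2)) atTop
          (nhds ((0:ℝ) * Real.log 0 - Q p.1 p.2 * Real.log (Q p.1 p.2))) := by
        have h1 : Tendsto (fun k => Rh k p.1 p.2) atTop (nhds 0) := by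
          have h := hRhconv p.1 p.2; rwa [hP0] at h
        exact ((Real.continuous_mul_log.tendsto _).comp h1).sub
          ((Real.continuous_mul_log.tendsto _).comp (hPkQ p.1 p.2))
      have hcoef : Tendsto (fun k => (1 - s k) * Q p.1 p.2) atTop (nhds (Q p.1 p.2)) := by
        have h := ((tendsto_const_nhds : Tendsto (fun _ : ℕ => (1:ℝ)) atTop (nhds 1)).sub
          hsconv).mul_const (Q p.1 p.2)
        have he : ((1:ℝ) - 0) * Q p.1 p.2 = Q p.1 p.2 := by ring
        rwa [he] at h
      have hprod : Tendsto (fun k => (1 - s k) * Q p.1 p.2 * Real.log (Mk k p.1 p.2))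
          atTop atBot := by
        have hev : ∀ᶠ k in atTop, (1 - s k) * Q p.1 p.2 * Real.log (Mk k p.1 p.2) ≤
            Q p.1 p.2 / 2 * Real.log (Mk k p.1 p.2) := by
          filter_upwards [hcoef.eventually (eventually_gt_nhds
            (by linarith : Q p.1 p.2 / 2 < Q p.1 p.2)),
            hlogbot.eventually (eventually_le_atBot 0)] with k hk1 hk2
          exact mul_le_mul_of_nonpos_right hk1.le hk2
        exact tendsto_atBot_mono' atTop hev
          (Tendsto.const_mul_atBot (by linarith : (0:ℝ) < Q p.1 p.2 / 2) hlogbot)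
      have hev2 : ∀ᶠ k in atTop, gl k p =
          (1 - s k) * Q p.1 p.2 * Real.log (Mk k p.1 p.2) +
          (Rh k p.1 p.2 * Real.log (Rh k p.1 p.2) -
            Pk k p.1 p.2 * Real.log (Pk k p.1 p.2)) := by
        filter_upwards [hMkne] with k hk
        have hPR : Pk k p.1 p.2 - Rh k p.1 p.2 = (1 - s k) * Q p.1 p.2 := by
          have : Rh k p.1 p.2 = Pk k p.1 p.2 + (1 - s k) * (P p.1 p.2 - Q p.1 p.2) := rfl
          rw [this, hP0]
          ring
        simp only [hgldef]
        rw [xlogdiv _ _ hk, xlogdiv _ _ hk]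
        linear_combination Real.log (Mk k p.1 p.2) * hPR
      exact Tendsto.congr' (Filter.EventuallyEq.symm hev2) (hprod.atBot_add hbr)
    have hAbot : Tendsto A atTop atBot := by
      refine (hT3lim.atBot_add hT1lim).congr fun k => ?_
      rw [hsplit k]
      ring
    obtain ⟨k, hk0, hk1⟩ := (hAge.and (hAbot.eventually (eventually_le_atBot (-1)))).exists
    linarith
  · have hQsupp : ∀ i j, M i j = 0 → Q i j = 0 := by
      intro i j hM0
      by_contra hne
      exact hT3 ⟨(i, j), Finset.mem_filter.mpr ⟨Finset.mem_univ _, hM0, hne⟩⟩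
    have hAlim : Tendsto A atTop (nhds (∑ p ∈ T1, G p)) := by
      refine hT1lim.congr fun k => ?_
      rw [hsplit k, Finset.not_nonempty_iff_eq_empty.mp hT3, Finset.sum_empty, add_zero]
    have hL : 0 ≤ ∑ p ∈ T1, G p := ge_of_tendsto hAlim hAge
    have hsum : ∀ (X : Matrix (Fin n) (Fin m) ℝ), (∀ i j, M i j = 0 → X i j = 0) →
        (∑ i, ∑ j, X i j * Real.log (X i j / M i j)) =
          ∑ p ∈ T1, (X p.1 p.2 * Real.log (X p.1 p.2) -
            X p.1 p.2 * Real.log (M p.1 p.2)) := by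
      intro X hX
      have h0 : ∀ p ∈ Finset.univ, p ∉ T1 →
          X (p : Fin n × Fin m).1 p.2 * Real.log (X p.1 p.2 / M p.1 p.2) = 0 := by
        intro p _ hp
        have hM0 : M p.1 p.2 = 0 := by
          by_contra h
          exact hp (Finset.mem_filter.mpr ⟨Finset.mem_univ _, h⟩)
        rw [hX _ _ hM0, zero_mul]
      calc (∑ i, ∑ j, X i j * Real.log (X i j / M i j))
          = ∑ p : Fin n × Fin m, X p.1 p.2 * Real.log (X p.1 p.2 / M p.1 p.2) := by
            rw [Fintype.sum_prod_type
              (f := fun p : Fin n × Fin m => X p.1 p.2 * Real.log (X p.1 p.2 / M p.1 p.2))]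
        _ = ∑ p ∈ T1, X p.1 p.2 * Real.log (X p.1 p.2 / M p.1 p.2) :=
            (Finset.sum_subset (Finset.subset_univ _) h0).symm
        _ = ∑ p ∈ T1, (X p.1 p.2 * Real.log (X p.1 p.2) -
            X p.1 p.2 * Real.log (M p.1 p.2)) :=
            Finset.sum_congr rfl fun p hp => xlogdiv _ _ (Finset.mem_filter.mp hp).2
    have hfinal : klDiv Q M ≤ klDiv P M := by
      rw [klDiv_eq_coe hQsupp, klDiv_eq_coe hfinP, EReal.coe_le_coe_iff, hsum Q hQsupp,
        hsum P hfinP, ← sub_nonneg, ← Finset.sum_sub_distrib]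
      simp only [hGdef] at hL
      exact hL
    exact hPhi.2.2 Q ⟨hQmem, fun Y hY => le_trans hfinal (hPhi.2.1 Y hY)⟩

end PhiAux

/-- Robustness/continuity of `Φ`: if `(M_k, r_k, c_k) → (M, r, c)` within the domain of
definition (nonnegative matrices, strictly positive probability marginals), with
`Φ(M_k, r_k, c_k)` and `Φ(M, r, c)` defined, then `Φ(M_k, r_k, c_k) → Φ(M, r, c)`. -/
theorem phi_continuous {n m : ℕ}
    (Mk : ℕ → Matrix (Fin n) (Fin m) ℝ) (rk : ℕ → Fin n → ℝ) (ck : ℕ → Fin m → ℝ)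
    (M : Matrix (Fin n) (Fin m) ℝ) (r : Fin n → ℝ) (c : Fin m → ℝ)
    (Pk : ℕ → Matrix (Fin n) (Fin m) ℝ) (P : Matrix (Fin n) (Fin m) ℝ)
    (hMk : ∀ k, ∀ i j, 0 ≤ Mk k i j)
    (hrk : ∀ k, (∀ i, 0 < rk k i) ∧ ∑ i, rk k i = 1)
    (hck : ∀ k, (∀ j, 0 < ck k j) ∧ ∑ j, ck k j = 1)
    (hM : ∀ i j, 0 ≤ M i j)
    (hr : (∀ i, 0 < r i) ∧ ∑ i, r i = 1)
    (hc : (∀ j, 0 < c j) ∧ ∑ j, c j = 1)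
    (hMconv : Filter.Tendsto Mk Filter.atTop (nhds M))
    (hrconv : Filter.Tendsto rk Filter.atTop (nhds r))
    (hcconv : Filter.Tendsto ck Filter.atTop (nhds c))
    (hPhik : ∀ k, IsPhi (Mk k) (rk k) (ck k) (Pk k))
    (hPhi : IsPhi M r c P) :
    Filter.Tendsto Pk Filter.atTop (nhds P) := by
  classical
  have hckc : ∀ j, Filter.Tendsto (fun k => ck k j) Filter.atTop (nhds (c j)) :=
    fun j => (tendsto_pi_nhds.mp hcconv) j
  have hrkr : ∀ i, Filter.Tendsto (fun k => rk k i) Filter.atTop (nhds (r i)) :=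
    fun i => (tendsto_pi_nhds.mp hrconv) i
  -- n and m are at least 1
  have hn1 : 1 ≤ n := by
    by_contra h
    interval_cases n
    · simpa using hr.2
  have hm1 : 1 ≤ m := by
    by_contra h
    interval_cases m
    · simpa using hc.2
  -- case n = 1
  rcases eq_or_lt_of_le hn1 with hn1' | hn2
  · -- n = 1 : the polytope is a singleton determined by the column sums
    obtain rfl : n = 1 := hn1'.symm
    refine tendsto_pi_nhds.mpr ?_
    intro i
    rw [tendsto_pi_nhds]
    intro j
    have hPk : ∀ k, Pk k i j = ck k j := by
      intro k
      have h := (hPhik k).1.2.2 j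
      rw [Fin.sum_univ_one] at h
      rwa [Subsingleton.elim i 0]
    have hP : P i j = c j := by
      have h := hPhi.1.2.2 j
      rw [Fin.sum_univ_one] at h
      rwa [Subsingleton.elim i 0]
    rw [hP]
    exact (hckc j).congr fun k => (hPk k).symm
  rcases eq_or_lt_of_le hm1 with hm1' | hm2
  · -- m = 1
    obtain rfl : m = 1 := hm1'.symm
    refine tendsto_pi_nhds.mpr ?_
    intro i
    rw [tendsto_pi_nhds]
    intro j
    have hPk : ∀ k, Pk k i j = rk k i := by
      intro k
      have h := (hPhik k).1.2.1 i
      rw [Fin.sum_univ_one] at h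
      rwa [Subsingleton.elim j 0]
    have hP : P i j = r i := by
      have h := hPhi.1.2.1 i
      rw [Fin.sum_univ_one] at h
      rwa [Subsingleton.elim j 0]
    rw [hP]
    exact (hrkr i).congr fun k => (hPk k).symm
  -- main case : 2 ≤ n, 2 ≤ m
  refine Filter.tendsto_of_subseq_tendsto fun ns hns => ?_
  have hK : IsCompact (Set.univ.pi fun _ : Fin n => Set.univ.pi fun _ : Fin m =>
      Set.Icc (0:ℝ) 1) :=
    isCompact_univ_pi fun _ => isCompact_univ_pi fun _ => isCompact_Icc
  have hmem : ∀ k, Pk k ∈ (Set.univ.pi fun _ : Fin n => Set.univ.pi fun _ : Fin m =>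
      Set.Icc (0:ℝ) 1) := by
    intro k
    refine Set.mem_pi.mpr ?_
    intro i _
    rw [Set.mem_pi]
    intro j _
    refine ⟨(hPhik k).1.1 i j, ?_⟩
    have h1 : Pk k i j ≤ rk k i := by
      rw [← (hPhik k).1.2.1 i]
      exact Finset.single_le_sum (fun j' _ => (hPhik k).1.1 i j') (Finset.mem_univ j)
    have h2 : rk k i ≤ 1 := by
      rw [← (hrk k).2]
      exact Finset.single_le_sum (fun i' _ => ((hrk k).1 i').le) (Finset.mem_univ i)
    linarith
  obtain ⟨Q, -, φ, hφ, hφconv⟩ := hK.isSeqCompact (x := fun k => Pk (ns k))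
    fun k => hmem (ns k)
  have hw : Filter.Tendsto (fun a => ns (φ a)) Filter.atTop Filter.atTop :=
    hns.comp hφ.tendsto_atTop
  have hQP : Q = P :=
    main_key hn2 hm2 (fun a => Mk (ns (φ a))) (fun a => rk (ns (φ a))) (fun a => ck (ns (φ a)))
      M r c (fun a => Pk (ns (φ a))) P Q (fun a => hMk _) (fun a => hrk _) (fun a => hck _)
      (hMconv.comp hw) hφconv (fun a => hPhik _) (hrconv.comp hw) (hcconv.comp hw) hPhi
  exact ⟨φ, hQP ▸ hφconv⟩
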